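/- Suppose A + λ̂B ≻ 0, λ̲ = inf{λ : A + λB ⪰ 0} is finite, and {v₁,…,v_r} is a basis of Null(A + λ̲B) which is (A + λ̂B)-orthonormal (i.e., vᵢᵀ(A + λ̂B)vᵢ = 1 and vᵢᵀ(A + λ̂B)vⱼ = 0 for i ≠ j). Then for any α > 0, the matrix à = A + λ̲B + α Σᵢ (A + λ̂B)vᵢvᵢᵀ(A + λ̂B) is positive definite. -/

import Mathlib

open Matrix

private lemma sum_mulVec' {n m : ℕ} (f : Fin m → Matrix (Fin n) (Fin n) ℝ)
    (x : Fin n → ℝ) : (∑ i, f i) *ᵥ x = ∑ i, f i *ᵥ x := by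
  ext j
  simp only [mulVec, dotProduct, Matrix.sum_apply, Finset.sum_mul, Finset.sum_apply]
  exact Finset.sum_comm

private lemma dotProduct_sum' {n m : ℕ} (x : Fin n → ℝ) (f : Fin m → Fin n → ℝ) :
    x ⬝ᵥ (∑ i, f i) = ∑ i, x ⬝ᵥ f i := by
  simp only [dotProduct, Finset.sum_apply, Finset.mul_sum]
  exact Finset.sum_comm

private lemma sum_dotProduct' {n m : ℕ} (f : Fin m → Fin n → ℝ) (x : Fin n → ℝ) :
    (∑ i, f i) ⬝ᵥ x = ∑ i, f i ⬝ᵥ x := by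
  simp only [dotProduct, Finset.sum_apply, Finset.sum_mul]
  exact Finset.sum_comm

private lemma vecMulVec_mulVec' {n : ℕ} (w x : Fin n → ℝ) :
    vecMulVec w w *ᵥ x = (w ⬝ᵥ x) • w := by
  ext i
  simp only [mulVec, dotProduct, vecMulVec_apply, Pi.smul_apply, smul_eq_mul,
    Finset.sum_mul]
  exact Finset.sum_congr rfl fun j _ => by ring

theorem stmt7 {n r : ℕ} (A B : Matrix (Fin n) (Fin n) ℝ)
    (hA : A.IsSymm) (hB : B.IsSymm)
    (lh : ℝ) (hP : (A + lh • B).PosDef)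
    (hbdd : BddBelow {t : ℝ | (A + t • B).PosSemidef})
    (lb : ℝ) (hlb : lb = sInf {t : ℝ | (A + t • B).PosSemidef})
    (v : Fin r → Fin n → ℝ)
    (hnull : ∀ i, (A + lb • B).mulVec (v i) = 0)
    (hspan : Submodule.span ℝ (Set.range v) = LinearMap.ker (A + lb • B).mulVecLin)
    (horth : ∀ i j, v i ⬝ᵥ (A + lh • B).mulVec (v j) = if i = j then 1 else 0)
    (α : ℝ) (hα : 0 < α) :
    (A + lb • B + α • ∑ i, vecMulVec ((A + lh • B).mulVec (v i))
      ((A + lh • B).mulVec (v i))).PosDef := by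
  set P := A + lh • B with hPdef
  set M := A + lb • B with hMdef
  set w : Fin r → Fin n → ℝ := fun i => P *ᵥ v i with hwdef
  -- symmetry of M
  have hMsymm : M.IsSymm := by
    rw [hMdef, Matrix.IsSymm, transpose_add, transpose_smul, hA.eq, hB.eq]
  have hMherm : M.IsHermitian := by
    rw [Matrix.IsHermitian, conjTranspose_eq_transpose_of_trivial]
    exact hMsymm
  -- M is positive semidefinite
  have hSne : Set.Nonempty {t : ℝ | (A + t • B).PosSemidef} := ⟨lh, hP.posSemidef⟩
  have hMpsd : M.PosSemidef := by
    refine posSemidef_iff_dotProduct_mulVec.mpr ⟨hMherm, fun x => ?_⟩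
    have hcl : lb ∈ closure {t : ℝ | (A + t • B).PosSemidef} :=
      hlb ▸ csInf_mem_closure hSne hbdd
    have hsub : {t : ℝ | (A + t • B).PosSemidef} ⊆
        {t : ℝ | 0 ≤ x ⬝ᵥ (A *ᵥ x) + t * (x ⬝ᵥ (B *ᵥ x))} := by
      intro t ht
      have h := (posSemidef_iff_dotProduct_mulVec.mp ht).2 x
      simpa [add_mulVec, smul_mulVec, dotProduct_add, dotProduct_smul,
        smul_eq_mul] using h
    have hclosed : IsClosed {t : ℝ | 0 ≤ x ⬝ᵥ (A *ᵥ x) + t * (x ⬝ᵥ (B *ᵥ x))} :=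
      isClosed_le continuous_const (by fun_prop)
    have hmem : lb ∈ {t : ℝ | 0 ≤ x ⬝ᵥ (A *ᵥ x) + t * (x ⬝ᵥ (B *ᵥ x))} :=
      hclosed.closure_subset (closure_mono hsub hcl)
    simpa [hMdef, add_mulVec, smul_mulVec, dotProduct_add, dotProduct_smul,
      smul_eq_mul] using hmem
  -- the quadratic form of the modified matrix
  have expand : ∀ x : Fin n → ℝ,
      x ⬝ᵥ ((M + α • ∑ i, vecMulVec (w i) (w i)) *ᵥ x)
        = x ⬝ᵥ (M *ᵥ x) + α * ∑ i, (w i ⬝ᵥ x) * (w i ⬝ᵥ x) := by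
    intro x
    rw [add_mulVec, dotProduct_add, smul_mulVec, dotProduct_smul, smul_eq_mul,
      sum_mulVec', dotProduct_sum']
    congr 1
    congr 1
    exact Finset.sum_congr rfl fun i _ => by
      rw [vecMulVec_mulVec', dotProduct_smul, smul_eq_mul, dotProduct_comm]
  refine posDef_iff_dotProduct_mulVec.mpr ⟨?_, ?_⟩
  · -- Hermitian
    rw [Matrix.IsHermitian, conjTranspose_eq_transpose_of_trivial, transpose_add,
      hMsymm.eq, transpose_smul]
    congr 2
    rw [Matrix.transpose_sum]
    refine Finset.sum_congr rfl fun i _ => ?_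
    ext a b
    simp [vecMulVec_apply, mul_comm]
  · intro x hx
    rw [star_trivial, expand x]
    have hsqnn : ∀ i : Fin r, 0 ≤ (w i ⬝ᵥ x) * (w i ⬝ᵥ x) := fun i => mul_self_nonneg _
    have hsumnn : (0:ℝ) ≤ ∑ i, (w i ⬝ᵥ x) * (w i ⬝ᵥ x) :=
      Finset.sum_nonneg fun i _ => hsqnn i
    have hq : 0 ≤ x ⬝ᵥ (M *ᵥ x) := by simpa using (posSemidef_iff_dotProduct_mulVec.mp hMpsd).2 x
    rcases hq.lt_or_eq with hpos | heq
    · exact add_pos_of_pos_of_nonneg hpos (mul_nonneg hα.le hsumnn)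
    · -- the M-part vanishes, so x is in the nullspace
      have hker : M *ᵥ x = 0 := by
        rw [← hMpsd.dotProduct_mulVec_zero_iff x, star_trivial]
        exact heq.symm
      have hxspan : x ∈ Submodule.span ℝ (Set.range v) := by
        rw [hspan]
        simpa [LinearMap.mem_ker, mulVecLin_apply] using hker
      obtain ⟨c, hc⟩ := (Submodule.mem_span_range_iff_exists_fun ℝ).mp hxspan
      have hcne : ∃ j, c j ≠ 0 := by
        by_contra h
        push_neg at h
        apply hx
        rw [← hc]
        simp [h]
      obtain ⟨j, hj⟩ := hcne
      have hwx : w j ⬝ᵥ x = c j := by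
        rw [dotProduct_comm, ← hc, sum_dotProduct']
        simp only [smul_dotProduct, smul_eq_mul, hwdef]
        simp [horth, mul_ite, Finset.sum_ite_eq']
      have hle : c j * c j ≤ ∑ i, (w i ⬝ᵥ x) * (w i ⬝ᵥ x) := by
        have := Finset.single_le_sum (f := fun i => (w i ⬝ᵥ x) * (w i ⬝ᵥ x))
          (fun i _ => hsqnn i) (Finset.mem_univ j)
        simpa [hwx] using this
      have hcpos : 0 < c j * c j := mul_self_pos.mpr hj
      rw [← heq, zero_add]
      exact mul_pos hα (lt_of_lt_of_le hcpos hle)
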